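/- Let H be a commutative cancellative monoid in which every element a can be written a = b²·c with c square-free. Let M be a submonoid of H such that for every a ∈ H and every square-free b ∈ H, if a²·b ∈ M then a ∈ M and a·b ∈ M. Then every atom of M is square-free in H. -/

import Mathlib

theorem stmt_5 {H : Type*} [CancelCommMonoid H]
    (hext : ∀ a : H, ∃ b c : H, Squarefree c ∧ a = b ^ 2 * c)
    (M : Submonoid H)
    (hM : ∀ a b : H, Squarefree b → a ^ 2 * b ∈ M → a ∈ M ∧ a * b ∈ M)
    (a : H) (haM : a ∈ M)
    (hnu : ¬ ∃ u ∈ M, a * u = 1)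
    (hatom : ∀ b c : H, b ∈ M → c ∈ M → a = b * c →
      (∃ u ∈ M, b * u = 1) ∨ (∃ u ∈ M, c * u = 1)) :
    Squarefree a := by
  obtain ⟨b, c, hc, hbc⟩ := hext a
  have hmem : b ^ 2 * c ∈ M := hbc ▸ haM
  obtain ⟨hbM, hbcM⟩ := hM b c hc hmem
  have hub : IsUnit b := by
    rcases hatom b (b * c) hbM hbcM (by rw [hbc, sq, mul_assoc]) with ⟨u, _, hu⟩ | ⟨u, _, hu⟩
    · exact IsUnit.of_mul_eq_one (a := b) u hu
    · exact IsUnit.of_mul_eq_one (a := b) (c * u) (by rw [← mul_assoc]; exact hu)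
  have hdvd : a ∣ c := by
    obtain ⟨v, hv⟩ := hub.pow 2
    refine ⟨(↑v⁻¹ : H), ?_⟩
    rw [hbc, ← hv, mul_comm (↑v : H) c, mul_assoc, v.mul_inv, mul_one]
  exact Squarefree.squarefree_of_dvd hdvd hc
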